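/- Let D be a persistence diagram with n distinct off-diagonal points and let (D₀,…,D_n) be a greedy PD sketch of D. Then for every i and every persistence diagram E with at most i distinct off-diagonal points, d_B(D, D_i) ≤ 2·d_B(D, E). In particular, D_i is a 2-approximation to the closest persistence diagram to D having i distinct off-diagonal points. -/

import Mathlib

open Metric

/-- The diagonal in the plane. -/
def diag : Set (ℝ × ℝ) := {p | p.1 = p.2}

/-- A persistence diagram: a finite multiset of points strictly above the diagonal
(the diagonal itself, with infinite multiplicity, is implicit). -/
structure PD where
  pts : Multiset (ℝ × ℝ)
  above : ∀ p ∈ pts, p.1 < p.2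

/-- The set of distinct off-diagonal points of a persistence diagram. -/
def PD.flat (A : PD) : Set (ℝ × ℝ) := {p | p ∈ A.pts}

/-- A (partial, multiplicity-aware) matching between persistence diagrams. -/
structure PDMatching (A B : PD) where
  pairs : Multiset ((ℝ × ℝ) × (ℝ × ℝ))
  subA : pairs.map Prod.fst ≤ A.pts
  subB : pairs.map Prod.snd ≤ B.pts

/-- Bottleneck cost of a matching: max over matched pairs of their distance, and over
unmatched off-diagonal points of their distance to the diagonal. -/
noncomputable def PDMatching.cost {A B : PD} (M : PDMatching A B) : ℝ :=
  ((M.pairs.map fun pq => dist pq.1 pq.2) +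
      (((A.pts - M.pairs.map Prod.fst) + (B.pts - M.pairs.map Prod.snd)).map
        fun q => infDist q diag)).fold max 0

/-- Bottleneck distance between persistence diagrams. -/
noncomputable def bottleneckDist (A B : PD) : ℝ :=
  sInf {c | ∃ M : PDMatching A B, M.cost = c}

/-- `q` is a nearest point to `b` in the set `S`. -/
def isNearest (S : Set (ℝ × ℝ)) (b q : ℝ × ℝ) : Prop :=
  q ∈ S ∧ ∀ r ∈ S, dist b q ≤ dist b r

/-- The natural reweighting determined by a nearest-point assignment `NN`:
each point `a` gets multiplicity equal to the number of points `b` of `B`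
(with multiplicity) with `NN b = a`; mass sent to the diagonal is dropped. -/
noncomputable def naturalReweighting (B : PD) (NN : ℝ × ℝ → ℝ × ℝ) : PD where
  pts := (B.pts.map NN).filter fun q => q.1 < q.2
  above := fun p hp => (Multiset.mem_filter.mp hp).2

/-- The set `{p_j : j < i}` of the first `i` points of an ordering. -/
def prefixSet {n : ℕ} (p : Fin n → ℝ × ℝ) (i : ℕ) : Set (ℝ × ℝ) :=
  {x | ∃ j : Fin n, (j : ℕ) < i ∧ p j = x}

/-- A greedy ordering of the distinct off-diagonal points of a persistence diagram `D`,
together with, for each prefix, a fixed nearest-point assignment used to form the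
natural reweightings.  `S_i = prefixSet p i ∪ Δ`. -/
structure GreedySketch (D : PD) (n : ℕ) where
  p : Fin n → ℝ × ℝ
  inj : Function.Injective p
  range_eq : Set.range p = D.flat
  greedy : ∀ i : Fin n,
    infDist (p i) (prefixSet p i ∪ diag) =
      hausdorffDist (prefixSet p i ∪ diag) (D.flat ∪ diag)
  NN : ℕ → ℝ × ℝ → ℝ × ℝ
  NN_nearest : ∀ i ≤ n, ∀ b ∈ D.pts, isNearest (prefixSet p i ∪ diag) b (NN i b)

/-- The `i`-th diagram `D_i` of the greedy PD sketch: the natural reweighting, with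
respect to `D`, of the `i`-th prefix. -/
noncomputable def GreedySketch.approx {D : PD} {n : ℕ} (G : GreedySketch D n) (i : ℕ) : PD :=
  naturalReweighting D (G.NN i)

/-- The `i`-th insertion radius `ε_i = d_H(S_i, flat D ∪ Δ)`. -/
noncomputable def GreedySketch.eps {D : PD} {n : ℕ} (G : GreedySketch D n) (i : ℕ) : ℝ :=
  hausdorffDist (prefixSet G.p i ∪ diag) (D.flat ∪ diag)

open scoped ENNReal


lemma fold_max_nonneg (s : Multiset ℝ) : 0 ≤ s.fold max 0 := by
  induction s using Multiset.induction_on with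
  | empty => simp
  | cons a s ih => rw [Multiset.fold_cons_left]; exact le_trans ih (le_max_right _ _)

lemma le_fold_max {s : Multiset ℝ} {a : ℝ} (h : a ∈ s) : a ≤ s.fold max 0 := by
  induction s using Multiset.induction_on with
  | empty => simp at h
  | cons b s ih =>
    rw [Multiset.fold_cons_left]
    rcases Multiset.mem_cons.mp h with h | h
    · exact h ▸ le_max_left _ _
    · exact le_trans (ih h) (le_max_right _ _)

lemma fold_max_le {s : Multiset ℝ} {c : ℝ} (h0 : 0 ≤ c) (h : ∀ a ∈ s, a ≤ c) :
    s.fold max 0 ≤ c := by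
  induction s using Multiset.induction_on with
  | empty => simpa
  | cons b s ih =>
    rw [Multiset.fold_cons_left]
    exact max_le (h b (Multiset.mem_cons_self _ _))
      (ih fun a ha => h a (Multiset.mem_cons_of_mem ha))

lemma cost_nonneg {A B : PD} (M : PDMatching A B) : 0 ≤ M.cost := fold_max_nonneg _

lemma diag_nonempty : diag.Nonempty := ⟨(0, 0), rfl⟩

lemma prefixSet_subset_flat {D : PD} {n : ℕ} (G : GreedySketch D n) (i : ℕ) :
    prefixSet G.p i ⊆ D.flat := by
  rintro x ⟨j, -, rfl⟩
  exact G.range_eq ▸ Set.mem_range_self j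

lemma hEdist_ne_top {D : PD} {n : ℕ} (G : GreedySketch D n) (i : ℕ) :
    EMetric.hausdorffEdist (prefixSet G.p i ∪ diag) (D.flat ∪ diag) ≠ ⊤ := by
  set r : ℝ≥0∞ := D.pts.toFinset.sup fun q => EMetric.infEdist q diag with hr
  have hrtop : r ≠ ⊤ := by
    rw [← lt_top_iff_ne_top, hr, Finset.sup_lt_iff (by exact bot_lt_top)]
    intro q _
    exact lt_of_le_of_lt (EMetric.infEdist_le_edist_of_mem (show (q.2, q.2) ∈ diag from rfl))
      (edist_lt_top _ _)
  refine ne_top_of_le_ne_top hrtop (EMetric.hausdorffEdist_le_of_infEdist ?_ ?_)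
  · intro x hx
    have hx' : x ∈ D.flat ∪ diag := by
      rcases hx with hx | hx
      · exact Or.inl (prefixSet_subset_flat G i hx)
      · exact Or.inr hx
    simpa [EMetric.infEdist_zero_of_mem hx'] using zero_le r
  · intro x hx
    rcases hx with hx | hx
    · refine le_trans (EMetric.infEdist_anti Set.subset_union_right) ?_
      rw [hr]
      exact Finset.le_sup (f := fun q => EMetric.infEdist q diag) (Multiset.mem_toFinset.mpr hx)
    · have hx' : x ∈ prefixSet G.p i ∪ diag := Or.inr hx
      rw [EMetric.infEdist_zero_of_mem hx']
      exact zero_le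

lemma eps_nonneg {D : PD} {n : ℕ} (G : GreedySketch D n) (i : ℕ) : 0 ≤ G.eps i :=
  Metric.hausdorffDist_nonneg

lemma infDist_le_eps {D : PD} {n : ℕ} (G : GreedySketch D n) {i : ℕ} {x : ℝ × ℝ}
    (hx : x ∈ D.flat ∪ diag) :
    Metric.infDist x (prefixSet G.p i ∪ diag) ≤ G.eps i := by
  have := Metric.infDist_le_hausdorffDist_of_mem hx
    (by rw [EMetric.hausdorffEdist_comm]; exact hEdist_ne_top G i)
  rwa [Metric.hausdorffDist_comm] at this

lemma eps_mono {D : PD} {n : ℕ} (G : GreedySketch D n) {k i : ℕ} (h : k ≤ i) :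
    G.eps i ≤ G.eps k := by
  refine Metric.hausdorffDist_le_of_infDist (eps_nonneg G k) ?_ ?_
  · intro x hx
    have hx' : x ∈ D.flat ∪ diag := by
      rcases hx with hx | hx
      · exact Or.inl (prefixSet_subset_flat G i hx)
      · exact Or.inr hx
    rw [Metric.infDist_zero_of_mem hx']
    exact eps_nonneg G k
  · intro x hx
    refine le_trans ?_ (infDist_le_eps G (i := k) hx)
    refine Metric.infDist_le_infDist_of_subset ?_ ⟨(0, 0), Or.inr rfl⟩
    rintro y (⟨j, hj, rfl⟩ | hy)
    · exact Or.inl ⟨j, lt_of_lt_of_le hj h, rfl⟩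
    · exact Or.inr hy

lemma dist_NN_le {D : PD} {n : ℕ} (G : GreedySketch D n) {i : ℕ} (hi : i ≤ n)
    {b : ℝ × ℝ} (hb : b ∈ D.pts) : dist b (G.NN i b) ≤ G.eps i := by
  have hnear := G.NN_nearest i hi b hb
  have hne : (prefixSet G.p i ∪ diag).Nonempty := ⟨(0, 0), Or.inr rfl⟩
  have h1 : dist b (G.NN i b) ≤ Metric.infDist b (prefixSet G.p i ∪ diag) := by
    rw [Metric.infDist_eq_iInf]
    have : Nonempty ↥(prefixSet G.p i ∪ diag) := hne.to_subtype
    exact le_ciInf fun y => hnear.2 y y.2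
  exact le_trans h1 (infDist_le_eps G (Or.inl hb))


lemma sub_filter_eq {α : Type*} [DecidableEq α] (s : Multiset α) (p : α → Prop)
    [DecidablePred p] : s - s.filter p = s.filter fun a => ¬p a := by
  ext a
  by_cases h : p a <;> simp [Multiset.count_sub, Multiset.count_filter, h]

lemma bottleneck_approx_le_eps {D : PD} {n : ℕ} (G : GreedySketch D n) {i : ℕ} (hi : i ≤ n) :
    bottleneckDist D (G.approx i) ≤ G.eps i := by
  classical
  have hsubA : ((D.pts.filter fun b => (G.NN i b).1 < (G.NN i b).2).map
      fun b => (b, G.NN i b)).map Prod.fst = D.pts.filter fun b => (G.NN i b).1 < (G.NN i b).2 := by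
    rw [Multiset.map_map]; simp
  have hsubB : ((D.pts.filter fun b => (G.NN i b).1 < (G.NN i b).2).map
      fun b => (b, G.NN i b)).map Prod.snd = (G.approx i).pts := by
    rw [Multiset.map_map]
    show Multiset.map (G.NN i) _ = _
    show Multiset.map (G.NN i) _ = Multiset.filter (fun q => q.1 < q.2) (D.pts.map (G.NN i))
    rw [Multiset.filter_map]
    rfl
  set M : PDMatching D (G.approx i) :=
    { pairs := (D.pts.filter fun b => (G.NN i b).1 < (G.NN i b).2).map fun b => (b, G.NN i b)
      subA := le_of_eq_of_le hsubA (Multiset.filter_le _ _)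
      subB := le_of_eq hsubB } with hM
  have hcost : M.cost ≤ G.eps i := by
    refine fold_max_le (eps_nonneg G i) ?_
    intro a ha
    rcases Multiset.mem_add.mp ha with ha | ha
    · rcases Multiset.mem_map.mp ha with ⟨pq, hpq, rfl⟩
      rcases Multiset.mem_map.mp hpq with ⟨b, hb, rfl⟩
      exact dist_NN_le G hi (Multiset.mem_of_mem_filter hb)
    · rcases Multiset.mem_map.mp ha with ⟨q, hq, rfl⟩
      rcases Multiset.mem_add.mp hq with hq | hq
      · have hsub : D.pts - M.pairs.map Prod.fst
            = D.pts.filter fun b => ¬((G.NN i b).1 < (G.NN i b).2) := by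
          rw [hM]
          simp only
          rw [hsubA, sub_filter_eq]
        rw [hsub] at hq
        have hqD : q ∈ D.pts := Multiset.mem_of_mem_filter hq
        have hqnot := Multiset.of_mem_filter hq
        have hnear := G.NN_nearest i hi q hqD
        have hdiag : G.NN i q ∈ diag := by
          rcases hnear.1 with h | h
          · exfalso
            have : G.NN i q ∈ D.pts := prefixSet_subset_flat G i h
            exact hqnot (D.above _ this)
          · exact h
        calc Metric.infDist q diag ≤ dist q (G.NN i q) :=
              Metric.infDist_le_dist_of_mem hdiag
          _ ≤ G.eps i := dist_NN_le G hi hqD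
      · exfalso
        have : (G.approx i).pts - M.pairs.map Prod.snd = 0 := by rw [hsubB]; simp
        rw [this] at hq
        exact absurd hq (Multiset.notMem_zero q)
  refine le_trans (csInf_le ?_ ⟨M, rfl⟩) hcost
  exact ⟨0, by rintro c ⟨M', rfl⟩; exact cost_nonneg M'⟩

lemma eps_le_two_cost {D : PD} {n : ℕ} (G : GreedySketch D n)
    {i : ℕ} (hi : i ≤ n) {E : PD} (hE : E.pts.toFinset.card ≤ i) (M : PDMatching D E) :
    G.eps i ≤ 2 * M.cost := by
  classical
  rcases eq_or_lt_of_le hi with rfl | hni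
  · -- i = n : the prefix is everything, eps = 0
    have hpre : prefixSet G.p i ∪ diag = D.flat ∪ diag := by
      rw [← G.range_eq]
      congr 1
      ext x
      constructor
      · rintro ⟨j, -, rfl⟩; exact Set.mem_range_self j
      · rintro ⟨j, rfl⟩; exact ⟨j, j.isLt, rfl⟩
    have : G.eps i = 0 := by rw [GreedySketch.eps, hpre, Metric.hausdorffDist_self_zero]
    rw [this]
    linarith [cost_nonneg M]
  · by_contra hcon
    push_neg at hcon
    have hc0 : 0 ≤ M.cost := cost_nonneg M
    have sep : ∀ k : Fin n, (k : ℕ) ≤ i →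
        G.eps i ≤ Metric.infDist (G.p k) (prefixSet G.p (k : ℕ) ∪ diag) := fun k hk =>
      (eps_mono G hk).trans (G.greedy k).ge
    have key : ∀ k : Fin (i + 1), ∃ e, e ∈ E.pts ∧
        dist (G.p ⟨(k : ℕ), lt_of_le_of_lt (Nat.lt_succ_iff.mp k.isLt) hni⟩) e ≤ M.cost := by
      intro k
      set k' : Fin n := ⟨(k : ℕ), lt_of_le_of_lt (Nat.lt_succ_iff.mp k.isLt) hni⟩ with hk'
      have hk'i : (k' : ℕ) ≤ i := Nat.lt_succ_iff.mp k.isLt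
      have hpk : G.p k' ∈ D.pts := by
        have : G.p k' ∈ D.flat := G.range_eq ▸ Set.mem_range_self k'
        exact this
      by_cases hm : G.p k' ∈ M.pairs.map Prod.fst
      · rcases Multiset.mem_map.mp hm with ⟨pq, hpq, he⟩
        refine ⟨pq.2, Multiset.mem_of_le M.subB (Multiset.mem_map_of_mem _ hpq), ?_⟩
        rw [← he]
        exact le_fold_max (Multiset.mem_add.mpr (Or.inl (Multiset.mem_map_of_mem _ hpq)))
      · exfalso
        have hmem : G.p k' ∈ D.pts - M.pairs.map Prod.fst := by
          rw [← Multiset.count_pos, Multiset.count_sub]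
          have h1 : 0 < Multiset.count (G.p k') D.pts := Multiset.count_pos.mpr hpk
          have h2 : Multiset.count (G.p k') (M.pairs.map Prod.fst) = 0 :=
            Multiset.count_eq_zero.mpr hm
          omega
        have hmem2 : Metric.infDist (G.p k') diag ≤ M.cost :=
          le_fold_max (Multiset.mem_add.mpr (Or.inr (Multiset.mem_map_of_mem _
            (Multiset.mem_add.mpr (Or.inl hmem)))))
        have h3 : G.eps i ≤ Metric.infDist (G.p k') diag := by
          refine (sep k' hk'i).trans ?_
          exact Metric.infDist_le_infDist_of_subset Set.subset_union_right diag_nonempty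
        linarith
    choose f hf1 hf2 using key
    obtain ⟨a, -, b, -, hab, hfab⟩ :=
      Finset.exists_ne_map_eq_of_card_lt_of_maps_to
        (s := (Finset.univ : Finset (Fin (i + 1)))) (t := E.pts.toFinset)
        (by simpa using lt_of_le_of_lt hE (Nat.lt_succ_self i))
        (fun k _ => Multiset.mem_toFinset.mpr (hf1 k))
    have main : ∀ x y : Fin (i + 1), x < y → f x = f y → False := by
      intro x y hxy hfxy
      set x' : Fin n := ⟨(x : ℕ), lt_of_le_of_lt (Nat.lt_succ_iff.mp x.isLt) hni⟩
      set y' : Fin n := ⟨(y : ℕ), lt_of_le_of_lt (Nat.lt_succ_iff.mp y.isLt) hni⟩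
      have h1 : G.eps i ≤ dist (G.p y') (G.p x') := by
        refine (sep y' (Nat.lt_succ_iff.mp y.isLt)).trans ?_
        exact Metric.infDist_le_dist_of_mem (Or.inl ⟨x', hxy, rfl⟩)
      have h2 : dist (G.p y') (G.p x') ≤ dist (G.p y') (f y) + dist (f x) (G.p x') := by
        rw [hfxy]
        exact dist_triangle _ _ _
      have h3 := hf2 x
      have h4 := hf2 y
      rw [dist_comm] at h3
      linarith
    rcases Ne.lt_or_gt hab with h | h
    · exact main a b h hfab
    · exact main b a h hfab.symm

/-- Each diagram `D_i` of a greedy PD sketch is a 2-approximation of the closest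
persistence diagram to `D` with at most `i` distinct off-diagonal points. -/
theorem greedy_sketch_two_approximation
    (D : PD) (n : ℕ) (hn : D.pts.toFinset.card = n) (G : GreedySketch D n)
    (i : ℕ) (hi : i ≤ n)
    (E : PD) (hE : E.pts.toFinset.card ≤ i) :
    bottleneckDist D (G.approx i) ≤ 2 * bottleneckDist D E := by
  have h1 : bottleneckDist D (G.approx i) ≤ G.eps i := bottleneck_approx_le_eps G hi
  have h2 : G.eps i / 2 ≤ bottleneckDist D E := by
    refine le_csInf ⟨_, ⟨⟨0, by simp, by simp⟩, rfl⟩⟩ ?_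
    rintro c ⟨M, rfl⟩
    linarith [eps_le_two_cost G hi hE M]
  linarith
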